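/- Let κ > 0 and on {(x,y) ∈ ℝ² : x > y} define Λ(x,y) = ((κ−4)(κ−2)(κ+4)/(2κ²))·[ (x−y)^{(3κ−4)/(2κ)} log(x−y) + (x−y)^{−(κ+4)/(2κ)}·(4κ x² − (4κ+κ²) y²)/16 ]. Then (∂/∂x + ∂/∂y)² Λ = −((κ−4)(κ−2)(κ+4)/16)·(x−y)^{−1/2−2/κ}. That is, with Z(x,y) = (x−y)^{−1/2−2/κ}, one has (L₁² − (κ/4)L₂)Λ = βZ with logarithmic coupling β = −(1/16)(κ−4)(κ−2)(κ+4). -/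

import Mathlib

/-- Logarithmic partner of the grade-two singular vector over the SLE_κ(ρ=-(κ+4)/2)
partition function. -/
noncomputable def Λ11 (κ x y : ℝ) : ℝ :=
  (κ - 4) * (κ - 2) * (κ + 4) / (2 * κ ^ 2) *
    ((x - y) ^ ((3 * κ - 4) / (2 * κ)) * Real.log (x - y)
      + (x - y) ^ (-(κ + 4) / (2 * κ))
          * (4 * κ * x ^ 2 - (4 * κ + κ ^ 2) * y ^ 2) / 16)

/-- `(∂/∂x + ∂/∂y) Λ`. -/
noncomputable def DΛ11 (κ x y : ℝ) : ℝ :=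
  deriv (fun x' => Λ11 κ x' y) x + deriv (fun y' => Λ11 κ x y') y

section aux
variable (κ x y : ℝ)

lemma rpow_hasDerivAt_x (p : ℝ) (h : y < x) :
    HasDerivAt (fun x' : ℝ => (x' - y) ^ p) (p * (x - y) ^ (p - 1)) x := by
  have ht : x - y ≠ 0 := sub_ne_zero.mpr (ne_of_gt h)
  have := (Real.hasDerivAt_rpow_const (p := p) (Or.inl ht)).comp x
    ((hasDerivAt_id x).sub_const y)
  simpa [Function.comp_def] using this

lemma rpow_hasDerivAt_y (p : ℝ) (h : y < x) :
    HasDerivAt (fun y' : ℝ => (x - y') ^ p) (-(p * (x - y) ^ (p - 1))) y := by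
  have ht : x - y ≠ 0 := sub_ne_zero.mpr (ne_of_gt h)
  have := (Real.hasDerivAt_rpow_const (p := p) (Or.inl ht)).comp y
    ((hasDerivAt_id y).const_sub x)
  simpa [Function.comp_def] using this

lemma Λ11_hasDerivAt_x (h : y < x) :
    HasDerivAt (fun x' => Λ11 κ x' y)
      ((κ - 4) * (κ - 2) * (κ + 4) / (2 * κ ^ 2) *
        (((3 * κ - 4) / (2 * κ) * (x - y) ^ ((3 * κ - 4) / (2 * κ) - 1) * Real.log (x - y)
            + (x - y) ^ ((3 * κ - 4) / (2 * κ)) * (x - y)⁻¹)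
          + ((-(κ + 4) / (2 * κ) * (x - y) ^ (-(κ + 4) / (2 * κ) - 1)
                * (4 * κ * x ^ 2 - (4 * κ + κ ^ 2) * y ^ 2)
              + (x - y) ^ (-(κ + 4) / (2 * κ)) * (8 * κ * x)) / 16))) x := by
  have ht : x - y ≠ 0 := sub_ne_zero.mpr (ne_of_gt h)
  have hlog : HasDerivAt (fun x' : ℝ => Real.log (x' - y)) (x - y)⁻¹ x := by
    have := (Real.hasDerivAt_log ht).comp x ((hasDerivAt_id x).sub_const y)
    simpa [Function.comp_def] using this
  have hpoly : HasDerivAt (fun x' : ℝ => 4 * κ * x' ^ 2 - (4 * κ + κ ^ 2) * y ^ 2)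
      (8 * κ * x) x := by
    have := ((hasDerivAt_pow 2 x).const_mul (4 * κ)).sub_const ((4 * κ + κ ^ 2) * y ^ 2)
    convert this using 1 <;> first | rfl | ring | (norm_num; ring)
  have := ((((rpow_hasDerivAt_x x y ((3 * κ - 4) / (2 * κ)) h).mul hlog).add
      (((rpow_hasDerivAt_x x y (-(κ + 4) / (2 * κ)) h).mul hpoly).div_const 16)).const_mul
      ((κ - 4) * (κ - 2) * (κ + 4) / (2 * κ ^ 2)))
  convert this using 2 <;> rfl

lemma Λ11_hasDerivAt_y (h : y < x) :
    HasDerivAt (fun y' => Λ11 κ x y')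
      ((κ - 4) * (κ - 2) * (κ + 4) / (2 * κ ^ 2) *
        ((-((3 * κ - 4) / (2 * κ) * (x - y) ^ ((3 * κ - 4) / (2 * κ) - 1)) * Real.log (x - y)
            + (x - y) ^ ((3 * κ - 4) / (2 * κ)) * (-(x - y)⁻¹))
          + ((-(-(κ + 4) / (2 * κ) * (x - y) ^ (-(κ + 4) / (2 * κ) - 1))
                * (4 * κ * x ^ 2 - (4 * κ + κ ^ 2) * y ^ 2)
              + (x - y) ^ (-(κ + 4) / (2 * κ)) * (-(2 * (4 * κ + κ ^ 2) * y))) / 16))) y := by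
  have ht : x - y ≠ 0 := sub_ne_zero.mpr (ne_of_gt h)
  have hlog : HasDerivAt (fun y' : ℝ => Real.log (x - y')) (-(x - y)⁻¹) y := by
    have := (Real.hasDerivAt_log ht).comp y ((hasDerivAt_id y).const_sub x)
    simpa [Function.comp_def] using this
  have hpoly : HasDerivAt (fun y' : ℝ => 4 * κ * x ^ 2 - (4 * κ + κ ^ 2) * y' ^ 2)
      (-(2 * (4 * κ + κ ^ 2) * y)) y := by
    have := ((hasDerivAt_pow 2 y).const_mul (4 * κ + κ ^ 2)).const_sub (4 * κ * x ^ 2)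
    convert this using 1 <;> first | rfl | ring | (norm_num; ring)
  have := ((((rpow_hasDerivAt_y x y ((3 * κ - 4) / (2 * κ)) h).mul hlog).add
      (((rpow_hasDerivAt_y x y (-(κ + 4) / (2 * κ)) h).mul hpoly).div_const 16)).const_mul
      ((κ - 4) * (κ - 2) * (κ + 4) / (2 * κ ^ 2)))
  convert this using 2 <;> rfl

lemma DΛ11_eq (h : y < x) :
    DΛ11 κ x y = (κ - 4) * (κ - 2) * (κ + 4) / (2 * κ ^ 2) *
      ((x - y) ^ (-(κ + 4) / (2 * κ)) * (8 * κ * x - (8 * κ + 2 * κ ^ 2) * y) / 16) := by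
  rw [DΛ11, (Λ11_hasDerivAt_x κ x y h).deriv, (Λ11_hasDerivAt_y κ x y h).deriv]
  ring

end aux


/-- `(∂/∂x + ∂/∂y)² Λ = -((κ-4)(κ-2)(κ+4)/16) (x-y)^{-1/2-2/κ}`,
i.e. `(L₁² - (κ/4)L₂) Λ = β Z` with logarithmic coupling
`β = -(1/16)(κ-4)(κ-2)(κ+4)`. -/
theorem stmt_11 (κ : ℝ) (hκ : 0 < κ) :
    ∀ x y : ℝ, y < x →
      deriv (fun x' => DΛ11 κ x' y) x + deriv (fun y' => DΛ11 κ x y') y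
        = -((κ - 4) * (κ - 2) * (κ + 4) / 16) * (x - y) ^ (-1 / 2 - 2 / κ) := by
  intro x y h
  set C := (κ - 4) * (κ - 2) * (κ + 4) / (2 * κ ^ 2) with hC
  set q := -(κ + 4) / (2 * κ) with hq
  have hdx : deriv (fun x' => DΛ11 κ x' y) x
      = C * ((q * (x - y) ^ (q - 1) * (8 * κ * x - (8 * κ + 2 * κ ^ 2) * y)
          + (x - y) ^ q * (8 * κ)) / 16) := by
    have hev : (fun x' => DΛ11 κ x' y)
        =ᶠ[nhds x] (fun x' => C * ((x' - y) ^ q * (8 * κ * x' - (8 * κ + 2 * κ ^ 2) * y) / 16)) := by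
      filter_upwards [Ioi_mem_nhds h] with x' hx'
      exact DΛ11_eq κ x' y hx'
    rw [hev.deriv_eq]
    have hlin : HasDerivAt (fun x' : ℝ => 8 * κ * x' - (8 * κ + 2 * κ ^ 2) * y) (8 * κ) x := by
      have := ((hasDerivAt_id x).const_mul (8 * κ)).sub_const ((8 * κ + 2 * κ ^ 2) * y)
      simpa using this
    exact ((((rpow_hasDerivAt_x x y q h).mul hlin).div_const 16).const_mul C).deriv
  have hdy : deriv (fun y' => DΛ11 κ x y') y
      = C * ((-(q * (x - y) ^ (q - 1)) * (8 * κ * x - (8 * κ + 2 * κ ^ 2) * y)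
          + (x - y) ^ q * (-(8 * κ + 2 * κ ^ 2))) / 16) := by
    have hev : (fun y' => DΛ11 κ x y')
        =ᶠ[nhds y] (fun y' => C * ((x - y') ^ q * (8 * κ * x - (8 * κ + 2 * κ ^ 2) * y') / 16)) := by
      filter_upwards [Iio_mem_nhds h] with y' hy'
      exact DΛ11_eq κ x y' hy'
    rw [hev.deriv_eq]
    have hlin : HasDerivAt (fun y' : ℝ => 8 * κ * x - (8 * κ + 2 * κ ^ 2) * y')
        (-(8 * κ + 2 * κ ^ 2)) y := by
      have := ((hasDerivAt_id y).const_mul (8 * κ + 2 * κ ^ 2)).const_sub (8 * κ * x)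
      simpa using this
    exact ((((rpow_hasDerivAt_y x y q h).mul hlin).div_const 16).const_mul C).deriv
  rw [hdx, hdy]
  have hq' : q = -1 / 2 - 2 / κ := by
    rw [hq]; field_simp; ring
  rw [hq']
  have hκ' : κ ≠ 0 := ne_of_gt hκ
  rw [hC]
  field_simp
  ring
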